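/- arXiv:1912.05518 — 3 statements merged into one kernel-verified Lean document; each statement's English description precedes it below -/
import Mathlib

section
/- Let p be an odd prime and let φ : ℚ_pˣ → ℤ_p be a continuous group homomorphism from the multiplicative group of units of ℚ_p to the additive group of ℤ_p, whose restriction to the subgroup 1+pℤ_p is not identically zero. Then there exist an integer k ≥ 1 and an element s ∈ 1+pℤ_p such that the kernel of φ is exactly the set {ζ·(p^k·s)^n : ζ ∈ μ_{p−1}, n ∈ ℤ}. -/
private theorem binomE {R : Type*} [CommRing R] (a : R) (n : ℕ) :
    ∃ t : R, (1 + a) ^ n = 1 + n * a + (n.choose 2) * a ^ 2 + a ^ 3 * t := by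
  induction n with
  | zero => exact ⟨0, by simp⟩
  | succ n ih =>
    obtain ⟨t, ht⟩ := ih
    refine ⟨t * (1 + a) + (n.choose 2 : R), ?_⟩
    have hch : (n + 1).choose 2 = n.choose 2 + n := by
      rw [Nat.choose_succ_succ]
      simp [Nat.choose_one_right, Nat.add_comm]
    rw [pow_succ, ht, hch]
    push_cast
    ring

variable {p : ℕ} [Fact p.Prime]

-- b coprime to p: (1+pα)^b = 1 + p(αb(1+py))
private theorem pow_coprime (α : ℤ_[p]) (b : ℕ) (hb : ¬ (p : ℤ) ∣ b) :
    ∃ y : ℤ_[p], (1 + p * α) ^ b = 1 + p * (α * b * (1 + p * y)) := by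
  obtain ⟨t, ht⟩ := binomE (p * α) b
  have hbu : IsUnit (b : ℤ_[p]) := by
    rw [PadicInt.isUnit_iff]
    have h1 : ‖((b : ℤ) : ℤ_[p])‖ < 1 ↔ (p : ℤ) ∣ (b : ℤ) := PadicInt.norm_int_lt_one_iff_dvd b
    have h2 : ‖((b : ℤ) : ℤ_[p])‖ ≤ 1 := PadicInt.norm_le_one _
    push_cast at h1
    rcases lt_or_eq_of_le h2 with h | h
    · exact absurd (h1.mp h) hb
    · exact h
  obtain ⟨u, hu⟩ := hbu
  refine ⟨(b.choose 2 * α + p * α ^ 2 * t) * ↑u⁻¹, ?_⟩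
  have huu : (↑u⁻¹ : ℤ_[p]) * b = 1 := by
    rw [← hu]; exact u.inv_mul
  rw [ht]
  have : (α * ↑b * (1 + ↑p * ((↑(b.choose 2) * α + ↑p * α ^ 2 * t) * ↑u⁻¹)))
      = α * b + p * ((b.choose 2 : ℤ_[p]) * α ^ 1 + p * α ^ 2 * t) * α * (↑u⁻¹ * b) := by
    ring
  rw [this, huu]
  ring

private theorem pow_p (hp : Odd p) (α : ℤ_[p]) :
    ∃ y : ℤ_[p], (1 + p * α) ^ p = 1 + p * (α * p * (1 + p * y)) := by
  obtain ⟨m, hm⟩ := hp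
  obtain ⟨t, ht⟩ := binomE (p * α) p
  have hch : p.choose 2 = p * m := by
    rw [Nat.choose_two_right, hm]
    have h1 : 2 * m + 1 - 1 = 2 * m := by omega
    rw [h1, show (2 * m + 1) * (2 * m) = (2 * m + 1) * m * 2 by ring,
      Nat.mul_div_cancel _ two_pos]
  refine ⟨m * α + α ^ 2 * t, ?_⟩
  rw [ht, hch]
  push_cast
  ring
private theorem key_pow_p (hp : Odd p) (j : ℕ) :
    ∃ y : ℤ_[p], (1 + p : ℤ_[p]) ^ (p ^ j) = 1 + (p : ℤ_[p]) * ((p : ℤ_[p]) ^ j * (1 + (p : ℤ_[p]) * y)) := by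
  induction j with
  | zero => exact ⟨0, by push_cast; ring⟩
  | succ j ih =>
    obtain ⟨y, hy⟩ := ih
    obtain ⟨y', hy'⟩ := pow_p hp ((p : ℤ_[p]) ^ j * (1 + (p : ℤ_[p]) * y))
    refine ⟨y + y' + p * (y * y'), ?_⟩
    rw [pow_succ, pow_mul, hy, hy']
    push_cast
    ring

private theorem key (hp : Odd p) (t : ℕ) :
    ∃ y : ℤ_[p], (1 + p : ℤ_[p]) ^ t = 1 + (p : ℤ_[p]) * ((t : ℤ_[p]) * (1 + (p : ℤ_[p]) * y)) := by
  rcases eq_or_ne t 0 with rfl | ht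
  · exact ⟨0, by push_cast; ring⟩
  have hfac : p ^ t.factorization p * (t / p ^ t.factorization p) = t :=
    Nat.ordProj_mul_ordCompl_eq_self t p
  set j := t.factorization p
  set b := t / p ^ j with hb
  have hbd : ¬ (p : ℤ) ∣ b := by
    have := Nat.not_dvd_ordCompl (Fact.out : p.Prime) ht
    exact_mod_cast fun h => this (by exact_mod_cast h)
  obtain ⟨y, hy⟩ := key_pow_p hp j
  obtain ⟨y', hy'⟩ := pow_coprime ((p : ℤ_[p]) ^ j * (1 + (p : ℤ_[p]) * y)) b hbd
  refine ⟨y + y' + p * (y * y'), ?_⟩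
  have : (1 + p : ℤ_[p]) ^ t = ((1 + p : ℤ_[p]) ^ (p ^ j)) ^ b := by
    rw [← pow_mul, hfac]
  rw [this, hy, hy']
  have hcast : ((t : ℕ) : ℤ_[p]) = ((p ^ j * b : ℕ) : ℤ_[p]) := by rw [hfac]
  rw [hcast]
  push_cast
  ring
private theorem key_norm_le (hp : Odd p) (t : ℕ) :
    ‖(1 + p : ℤ_[p]) ^ t - 1‖ ≤ ‖(t : ℤ_[p])‖ * (p : ℝ)⁻¹ := by
  obtain ⟨y, hy⟩ := key hp t
  rw [hy, add_sub_cancel_left]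
  calc ‖(p : ℤ_[p]) * ((t : ℤ_[p]) * (1 + (p : ℤ_[p]) * y))‖
      = (p : ℝ)⁻¹ * (‖(t : ℤ_[p])‖ * ‖1 + (p : ℤ_[p]) * y‖) := by
        rw [norm_mul, norm_mul, PadicInt.norm_p]
    _ ≤ (p : ℝ)⁻¹ * (‖(t : ℤ_[p])‖ * 1) := by
        gcongr
        exact PadicInt.norm_le_one _
    _ = ‖(t : ℤ_[p])‖ * (p : ℝ)⁻¹ := by ring

private theorem key_dvd_sub_one (hp : Odd p) (t : ℕ) :
    (p : ℤ_[p]) ∣ (1 + p : ℤ_[p]) ^ t - 1 := by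
  obtain ⟨y, hy⟩ := key hp t
  exact ⟨(t : ℤ_[p]) * (1 + (p : ℤ_[p]) * y), by rw [hy]; ring⟩

private theorem dense_pow (hp : Odd p) (z : ℤ_[p]) (hz : (p : ℤ_[p]) ∣ z - 1) (m : ℕ) :
    ∃ t : ℕ, (p : ℤ_[p]) ^ (m + 1) ∣ z - (1 + p) ^ t := by
  induction m with
  | zero => exact ⟨0, by simpa using hz⟩
  | succ m ih =>
    obtain ⟨t, ht⟩ := ih
    obtain ⟨w, hw⟩ := ht
    set j := (PadicInt.toZMod w).val with hj
    have hjw : (p : ℤ_[p]) ∣ w - j := by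
      have h1 := PadicInt.toZMod_spec w
      rw [PadicInt.maximalIdeal_eq_span_p, Ideal.mem_span_singleton] at h1
      rwa [← ZMod.natCast_val] at h1
    obtain ⟨y, hy⟩ := key hp (j * p ^ m)
    refine ⟨t + j * p ^ m, ?_⟩
    have hc : ((j * p ^ m : ℕ) : ℤ_[p]) = (j : ℤ_[p]) * (p : ℤ_[p]) ^ m := by push_cast; ring
    have hsplit : z - (1 + p : ℤ_[p]) ^ (t + j * p ^ m)
        = (p : ℤ_[p]) ^ (m + 1) * (w - j * ((1 + p) ^ t * (1 + p * y))) := by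
      rw [pow_add]
      calc z - (1 + p : ℤ_[p]) ^ t * (1 + p) ^ (j * p ^ m)
          = (z - (1 + p) ^ t) - (1 + p) ^ t * ((1 + p) ^ (j * p ^ m) - 1) := by ring
        _ = (p : ℤ_[p]) ^ (m + 1) * (w - j * ((1 + p) ^ t * (1 + p * y))) := by
            rw [hw, hy, hc]; ring
    rw [hsplit, pow_succ]
    refine mul_dvd_mul_left _ ?_
    have h2 : (p : ℤ_[p]) ∣ (1 + p : ℤ_[p]) ^ t * (1 + (p : ℤ_[p]) * y) - 1 := by
      obtain ⟨e, he⟩ := key_dvd_sub_one hp (p := p) t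
      refine ⟨e * (1 + (p : ℤ_[p]) * y) + y, ?_⟩
      have h3 : (1 + p : ℤ_[p]) ^ t * (1 + (p : ℤ_[p]) * y) - 1
          = ((1 + p : ℤ_[p]) ^ t - 1) * (1 + (p : ℤ_[p]) * y) + (p : ℤ_[p]) * y := by ring
      rw [h3, he]; ring
    have h4 : w - (j : ℤ_[p]) * ((1 + p : ℤ_[p]) ^ t * (1 + (p : ℤ_[p]) * y))
        = (w - j) - j * ((1 + p : ℤ_[p]) ^ t * (1 + (p : ℤ_[p]) * y) - 1) := by ring
    rw [h4]
    exact dvd_sub hjw (Dvd.dvd.mul_left h2 _)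
private theorem dvd_iff_norm_lt_one (z : ℤ_[p]) : (p : ℤ_[p]) ∣ z ↔ ‖z‖ < 1 :=
  (PadicInt.norm_lt_one_iff_dvd z).symm

private theorem teich (hp : Odd p) (w : ℤ_[p]) (hw : ‖w‖ = 1) :
    ∃ ζ u : ℤ_[p], ζ ^ (p - 1) = 1 ∧ ‖ζ‖ = 1 ∧ (p : ℤ_[p]) ∣ u - 1 ∧ w = ζ * u := by
  have hp3 : 3 ≤ p := by
    have h2 := (Fact.out : p.Prime).two_le
    rcases Nat.lt_or_ge p 3 with h | h
    · interval_cases p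
      · exact absurd hp (by decide)
    · exact h
  set F : Polynomial ℤ_[p] := Polynomial.X ^ (p - 1) - Polynomial.C 1 with hF
  have hFeval : ∀ z : ℤ_[p], F.eval z = z ^ (p - 1) - 1 := by
    intro z; simp [hF]
  have hFderiv : F.derivative = Polynomial.C ((p - 1 : ℕ) : ℤ_[p]) * Polynomial.X ^ (p - 2) := by
    rw [hF]
    rw [Polynomial.derivative_sub, Polynomial.derivative_C, Polynomial.derivative_X_pow]
    have : p - 1 - 1 = p - 2 := by omega
    rw [this, sub_zero]
  have hnormp1 : ‖((p - 1 : ℕ) : ℤ_[p])‖ = 1 := by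
    rcases lt_or_eq_of_le (PadicInt.norm_le_one ((p - 1 : ℕ) : ℤ_[p])) with h | h
    · exfalso
      have hd : (p : ℤ) ∣ ((p - 1 : ℕ) : ℤ) := by
        have := (PadicInt.norm_int_lt_one_iff_dvd ((p - 1 : ℕ) : ℤ)).mp (by push_cast at h ⊢; exact h)
        exact this
      have : (p : ℤ) ∣ (p - 1 : ℕ) := hd
      rw [Int.natCast_dvd_natCast] at this
      have := Nat.le_of_dvd (by omega) this
      omega
    · exact h
  have hderiveval : ∀ z : ℤ_[p], ‖z‖ = 1 → ‖F.derivative.eval z‖ = 1 := by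
    intro z hz
    rw [hFderiv]
    simp only [Polynomial.eval_mul, Polynomial.eval_C, Polynomial.eval_pow, Polynomial.eval_X]
    rw [norm_mul, norm_pow, hz, hnormp1, one_pow, mul_one]
  have hwne : PadicInt.toZMod w ≠ 0 := by
    intro h0
    have : w ∈ RingHom.ker (PadicInt.toZMod : ℤ_[p] →+* ZMod p) := h0
    rw [PadicInt.ker_toZMod, PadicInt.maximalIdeal_eq_span_p, Ideal.mem_span_singleton,
      dvd_iff_norm_lt_one, hw] at this
    exact lt_irrefl 1 this
  have hfermat : (PadicInt.toZMod w) ^ (p - 1) = 1 := ZMod.pow_card_sub_one_eq_one hwne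
  have hevalw : ‖F.eval w‖ < 1 := by
    rw [hFeval, ← dvd_iff_norm_lt_one]
    have h0 : PadicInt.toZMod (w ^ (p - 1) - 1) = 0 := by
      rw [map_sub, map_pow, map_one, hfermat, sub_self]
    have : w ^ (p - 1) - 1 ∈ RingHom.ker (PadicInt.toZMod : ℤ_[p] →+* ZMod p) := h0
    rwa [PadicInt.ker_toZMod, PadicInt.maximalIdeal_eq_span_p, Ideal.mem_span_singleton] at this
  have hnorm : ‖F.eval w‖ < ‖F.derivative.eval w‖ ^ 2 := by
    rw [hderiveval w hw, one_pow]; exact hevalw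
  obtain ⟨z, hz1, hz2, -, -⟩ := hensels_lemma hnorm
  simp only [Polynomial.coe_aeval_eq_eval] at hz1 hz2
  have hzpow : z ^ (p - 1) = 1 := by
    have := hFeval z
    rw [hz1] at this
    exact sub_eq_zero.mp this.symm
  have hznorm : ‖z‖ = 1 := by
    rcases lt_or_eq_of_le (PadicInt.norm_le_one z) with h | h
    · exfalso
      have : ‖z ^ (p - 1)‖ < 1 := by
        rw [norm_pow]
        exact pow_lt_one₀ (norm_nonneg z) h (by omega)
      rw [hzpow] at this
      simp at this
    · exact h
  refine ⟨z, z ^ (p - 2) * w, hzpow, hznorm, ?_, ?_⟩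
  · rw [← PadicInt.norm_lt_one_iff_dvd]
    have heq : z ^ (p - 2) * w - 1 = z ^ (p - 2) * (w - z) := by
      have : z ^ (p - 2) * z = 1 := by
        rw [← pow_succ]
        have h2 : p - 2 + 1 = p - 1 := by omega
        rw [h2, hzpow]
      calc z ^ (p - 2) * w - 1 = z ^ (p - 2) * (w - z) + (z ^ (p - 2) * z - 1) := by ring
        _ = z ^ (p - 2) * (w - z) := by rw [this]; ring
    rw [heq, norm_mul, norm_pow, hznorm, one_pow, one_mul]
    calc ‖w - z‖ = ‖z - w‖ := by rw [← norm_neg]; ring_nf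
      _ < 1 := by rw [hderiveval w hw] at hz2; exact hz2
  · have h2 : p - 2 + 1 = p - 1 := by omega
    calc w = z ^ (p - 1) * w := by rw [hzpow, one_mul]
      _ = z * (z ^ (p - 2) * w) := by rw [← h2, pow_succ]; ring
open Filter Topology

private theorem norm_one_add_pmul (y : ℤ_[p]) : ‖1 + (p : ℤ_[p]) * y‖ = 1 := by
  rcases lt_or_eq_of_le (PadicInt.norm_le_one (1 + (p : ℤ_[p]) * y)) with h | h
  · exfalso
    rw [PadicInt.norm_lt_one_iff_dvd] at h
    have h1 : (p : ℤ_[p]) ∣ 1 := by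
      have : (1 : ℤ_[p]) = (1 + (p : ℤ_[p]) * y) - p * y := by ring
      rw [this]
      exact dvd_sub h (Dvd.intro y rfl)
    rw [← PadicInt.norm_lt_one_iff_dvd] at h1
    simp at h1
  · exact h

private theorem gQ_ne (y : ℤ_[p]) : ((1 + (p : ℤ_[p]) * y : ℤ_[p]) : ℚ_[p]) ≠ 0 := by
  intro h
  have h2 : ‖((1 + (p : ℤ_[p]) * y : ℤ_[p]) : ℚ_[p])‖ = 1 := by
    rw [PadicInt.padic_norm_e_of_padicInt, norm_one_add_pmul]
  rw [h] at h2
  simp at h2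

private noncomputable def gu (p : ℕ) [Fact p.Prime] : ℚ_[p]ˣ :=
  Units.mk0 ((1 + p : ℤ_[p]) : ℚ_[p]) (by simpa using gQ_ne (1 : ℤ_[p]))

private theorem gu_coe : ((gu p : ℚ_[p]ˣ) : ℚ_[p]) = ((1 + p : ℤ_[p]) : ℚ_[p]) := rfl

private theorem gu_pow_coe (t : ℕ) :
    ((gu p ^ t : ℚ_[p]ˣ) : ℚ_[p]) = (((1 + p : ℤ_[p]) ^ t : ℤ_[p]) : ℚ_[p]) := by
  rw [Units.val_pow_eq_pow_val, gu_coe, PadicInt.coe_pow]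

private theorem tend_bpow : Tendsto (fun m : ℕ => (p : ℝ) ^ (-(m + 1) : ℤ)) atTop (𝓝 0) := by
  have hp1 : (1 : ℝ) < p := by exact_mod_cast (Fact.out : p.Prime).one_lt
  have h0 : (0 : ℝ) ≤ (p : ℝ)⁻¹ := by positivity
  have h1 : (p : ℝ)⁻¹ < 1 := by
    rw [inv_lt_one_iff₀]; right; exact hp1
  have := (tendsto_pow_atTop_nhds_zero_of_lt_one h0 h1).comp (tendsto_add_atTop_nat 1)
  convert this using 2 with m
  simp only [Function.comp]
  rw [show (-(↑m + 1) : ℤ) = -((m + 1 : ℕ) : ℤ) by push_cast; ring, zpow_neg,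
    zpow_natCast, ← inv_pow]

private theorem tendsto_units_of_norm {V : ℕ → ℚ_[p]ˣ} {U : ℚ_[p]ˣ} {b : ℕ → ℝ}
    (hb : Tendsto b atTop (𝓝 0)) (h : ∀ m, ‖(V m : ℚ_[p]) - U‖ ≤ b m) :
    Tendsto V atTop (𝓝 U) := by
  rw [Units.isEmbedding_val₀.tendsto_nhds_iff]
  exact tendsto_sub_nhds_zero_iff.mp (squeeze_zero_norm h hb)

private theorem tendsto_coeQ {f : ℕ → ℤ_[p]} {u : ℤ_[p]} (h : Tendsto f atTop (𝓝 u)) :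
    Tendsto (fun m => (f m : ℚ_[p])) atTop (𝓝 (u : ℚ_[p])) := by
  rw [Metric.tendsto_atTop] at h ⊢
  intro ε hε
  obtain ⟨N, hN⟩ := h ε hε
  refine ⟨N, fun n hn => ?_⟩
  have h2 := hN n hn
  rw [dist_eq_norm] at h2 ⊢
  rwa [show (f n : ℚ_[p]) - u = ((f n - u : ℤ_[p]) : ℚ_[p]) by push_cast; ring,
    PadicInt.padic_norm_e_of_padicInt]
section Phi
variable {φ : ℚ_[p]ˣ → ℤ_[p]} (hhom : ∀ a b : ℚ_[p]ˣ, φ (a * b) = φ a + φ b)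
include hhom

private theorem phi_one : φ 1 = 0 := by
  have h := hhom 1 1
  rw [one_mul] at h
  have h2 : φ 1 + φ 1 = φ 1 + 0 := by rw [add_zero]; exact h.symm
  exact (add_left_cancel h2)

private theorem phi_inv (a : ℚ_[p]ˣ) : φ a⁻¹ = -φ a := by
  have h := hhom a a⁻¹
  rw [mul_inv_cancel, phi_one hhom] at h
  exact eq_neg_of_add_eq_zero_right h.symm

private theorem phi_pow (a : ℚ_[p]ˣ) (n : ℕ) : φ (a ^ n) = (n : ℤ_[p]) * φ a := by
  induction n with
  | zero => simp [phi_one hhom]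
  | succ n ih =>
    rw [pow_succ, hhom, ih]
    push_cast
    ring

private theorem phi_zpow (a : ℚ_[p]ˣ) (n : ℤ) : φ (a ^ n) = (n : ℤ_[p]) * φ a := by
  cases n with
  | ofNat k => rw [Int.ofNat_eq_coe, zpow_natCast, phi_pow hhom]; push_cast; ring
  | negSucc k =>
    rw [zpow_negSucc, phi_inv hhom, phi_pow hhom]
    push_cast
    ring

end Phi

private theorem approx (hp : Odd p) {φ : ℚ_[p]ˣ → ℤ_[p]} (hcont : Continuous φ)
    {U : ℚ_[p]ˣ} {y : ℤ_[p]} (hU : (U : ℚ_[p]) = 1 + p * y) :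
    ∃ a : ℕ → ℕ,
      (∀ m : ℕ, ‖(1 + (p : ℤ_[p]) * y) - (1 + p) ^ (a m)‖ ≤ (p : ℝ) ^ (-(m + 1) : ℤ)) ∧
      Tendsto (fun m => φ (gu p ^ a m)) atTop (𝓝 (φ U)) := by
  have hz : (p : ℤ_[p]) ∣ (1 + (p : ℤ_[p]) * y) - 1 := ⟨y, by ring⟩
  choose a ha using fun m => dense_pow hp _ hz m
  have hbound : ∀ m, ‖(1 + (p : ℤ_[p]) * y) - (1 + p) ^ (a m)‖ ≤ (p : ℝ) ^ (-(m + 1) : ℤ) := by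
    intro m
    rw [show (-(m + 1) : ℤ) = -((m + 1 : ℕ) : ℤ) by push_cast; ring,
      PadicInt.norm_le_pow_iff_mem_span_pow, Ideal.mem_span_singleton]
    exact ha m
  refine ⟨a, hbound, ?_⟩
  have hUnits : Tendsto (fun m => gu p ^ a m) atTop (𝓝 U) := by
    apply tendsto_units_of_norm (tend_bpow (p := p))
    intro m
    rw [gu_pow_coe, hU]
    rw [show (((1 + p : ℤ_[p]) ^ a m : ℤ_[p]) : ℚ_[p]) - (1 + (p : ℚ_[p]) * y)
        = -(((1 + (p : ℤ_[p]) * y) - ((1 + p : ℤ_[p]) ^ a m) : ℤ_[p]) : ℚ_[p]) by push_cast; ring,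
      norm_neg, PadicInt.padic_norm_e_of_padicInt]
    exact hbound m
  exact (hcont.tendsto U).comp hUnits

private theorem c_ne_zero (hp : Odd p) {φ : ℚ_[p]ˣ → ℤ_[p]}
    (hhom : ∀ a b : ℚ_[p]ˣ, φ (a * b) = φ a + φ b) (hcont : Continuous φ)
    (hnt : ∃ u : ℚ_[p]ˣ, (∃ y : ℤ_[p], (u : ℚ_[p]) = 1 + p * y) ∧ φ u ≠ 0) :
    φ (gu p) ≠ 0 := by
  obtain ⟨U, ⟨y, hU⟩, hphi⟩ := hnt
  intro hc
  obtain ⟨a, -, htend⟩ := approx hp hcont hU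
  have h2 : (fun m => φ (gu p ^ a m)) = fun _ => (0 : ℤ_[p]) := by
    funext m; rw [phi_pow hhom, hc, mul_zero]
  rw [h2] at htend
  exact hphi (tendsto_nhds_unique htend tendsto_const_nhds)

private theorem dvd_of_norm_le {c z : ℤ_[p]} (hc : c ≠ 0) (h : ‖z‖ ≤ ‖c‖) : c ∣ z := by
  have hmc := PadicInt.unitCoeff_spec hc
  set m := c.valuation with hm
  have hcn : ‖c‖ = (p : ℝ) ^ (-(m : ℤ)) := by
    rw [PadicInt.norm_eq_zpow_neg_valuation hc]
  have h2 : z ∈ Ideal.span {(p : ℤ_[p]) ^ m} := by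
    rw [← PadicInt.norm_le_pow_iff_mem_span_pow]
    rw [hcn] at h
    exact_mod_cast h
  rw [Ideal.mem_span_singleton] at h2
  obtain ⟨w, hw⟩ := h2
  refine ⟨(↑(PadicInt.unitCoeff hc)⁻¹ : ℤ_[p]) * w, ?_⟩
  rw [hw]
  have huu : ((PadicInt.unitCoeff hc) : ℤ_[p]) * ((PadicInt.unitCoeff hc)⁻¹ : ℤ_[p]ˣ) = 1 := by
    rw [← Units.val_mul, mul_inv_cancel, Units.val_one]
  calc (p : ℤ_[p]) ^ m * w
      = (((PadicInt.unitCoeff hc) : ℤ_[p]) * ((PadicInt.unitCoeff hc)⁻¹ : ℤ_[p]ˣ))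
        * ((p : ℤ_[p]) ^ m * w) := by rw [huu, one_mul]
    _ = (((PadicInt.unitCoeff hc) : ℤ_[p]) * (p : ℤ_[p]) ^ m)
        * (((PadicInt.unitCoeff hc)⁻¹ : ℤ_[p]ˣ) * w) := by ring
    _ = c * (((PadicInt.unitCoeff hc)⁻¹ : ℤ_[p]ˣ) * w) := by rw [← hmc]

private theorem mem_c (hp : Odd p) {φ : ℚ_[p]ˣ → ℤ_[p]}
    (hhom : ∀ a b : ℚ_[p]ˣ, φ (a * b) = φ a + φ b) (hcont : Continuous φ)
    {U : ℚ_[p]ˣ} {y : ℤ_[p]} (hU : (U : ℚ_[p]) = 1 + p * y) :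
    φ (gu p) ∣ φ U := by
  obtain ⟨a, -, htend⟩ := approx hp hcont hU
  have hnorm : ‖φ U‖ ≤ ‖φ (gu p)‖ := by
    have h1 : Tendsto (fun m => ‖φ (gu p ^ a m)‖) atTop (𝓝 ‖φ U‖) := htend.norm
    refine le_of_tendsto h1 (Eventually.of_forall fun m => ?_)
    rw [phi_pow hhom, norm_mul]
    calc ‖((a m : ℕ) : ℤ_[p])‖ * ‖φ (gu p)‖ ≤ 1 * ‖φ (gu p)‖ := by
          gcongr; exact PadicInt.norm_le_one _
      _ = _ := one_mul _
  rcases eq_or_ne (φ (gu p)) 0 with hc | hc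
  · rw [hc] at hnorm ⊢
    rw [norm_zero] at hnorm
    rw [norm_le_zero_iff.mp hnorm]
  · exact dvd_of_norm_le hc hnorm

private theorem inj (hp : Odd p) {φ : ℚ_[p]ˣ → ℤ_[p]}
    (hhom : ∀ a b : ℚ_[p]ˣ, φ (a * b) = φ a + φ b) (hcont : Continuous φ)
    (hc : φ (gu p) ≠ 0) {U : ℚ_[p]ˣ} {y : ℤ_[p]}
    (hU : (U : ℚ_[p]) = 1 + p * y) (h0 : φ U = 0) : U = 1 := by
  obtain ⟨a, hb, htend⟩ := approx hp hcont hU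
  rw [h0] at htend
  have h1 : Tendsto (fun m => ‖((a m : ℕ) : ℤ_[p])‖ * ‖φ (gu p)‖) atTop (𝓝 0) := by
    have h1' := htend.norm
    rw [norm_zero] at h1'
    have heq : (fun m => ‖φ (gu p ^ a m)‖) = fun m => ‖((a m : ℕ) : ℤ_[p])‖ * ‖φ (gu p)‖ := by
      funext m; rw [phi_pow hhom, norm_mul]
    rwa [heq] at h1'
  have hcn : ‖φ (gu p)‖ ≠ 0 := by simpa using hc
  have h2 : Tendsto (fun m => ‖((a m : ℕ) : ℤ_[p])‖) atTop (𝓝 0) := by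
    have h2' := h1.div_const ‖φ (gu p)‖
    rw [zero_div] at h2'
    have heq : (fun m => ‖((a m : ℕ) : ℤ_[p])‖ * ‖φ (gu p)‖ / ‖φ (gu p)‖)
        = fun m => ‖((a m : ℕ) : ℤ_[p])‖ := by
      funext m; rw [mul_div_cancel_right₀ _ hcn]
    rwa [heq] at h2'
  have h3 : ∀ m : ℕ, ‖(1 + (p : ℤ_[p]) * y) - 1‖
      ≤ (p : ℝ) ^ (-(m + 1) : ℤ) + ‖((a m : ℕ) : ℤ_[p])‖ * (p : ℝ)⁻¹ := by
    intro m
    calc ‖(1 + (p : ℤ_[p]) * y) - 1‖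
        = ‖((1 + (p : ℤ_[p]) * y) - (1 + p) ^ a m) + ((1 + p : ℤ_[p]) ^ a m - 1)‖ := by
          congr 1; ring
      _ ≤ ‖(1 + (p : ℤ_[p]) * y) - (1 + p) ^ a m‖ + ‖(1 + p : ℤ_[p]) ^ a m - 1‖ := norm_add_le _ _
      _ ≤ (p : ℝ) ^ (-(m + 1) : ℤ) + ‖((a m : ℕ) : ℤ_[p])‖ * (p : ℝ)⁻¹ :=
          add_le_add (hb m) (key_norm_le hp (a m))
  have h4 : Tendsto (fun m : ℕ => (p : ℝ) ^ (-(m + 1) : ℤ) + ‖((a m : ℕ) : ℤ_[p])‖ * (p : ℝ)⁻¹)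
      atTop (𝓝 0) := by
    have := (tend_bpow (p := p)).add (h2.mul_const ((p : ℝ)⁻¹))
    simpa using this
  have h5 : ‖(1 + (p : ℤ_[p]) * y) - 1‖ ≤ 0 := ge_of_tendsto h4 (Eventually.of_forall h3)
  have h6 : (1 + (p : ℤ_[p]) * y) = 1 := by
    have := norm_le_zero_iff.mp h5
    have h7 := sub_eq_zero.mp this
    exact h7
  apply Units.ext
  rw [hU, Units.val_one]
  have : ((1 + (p : ℤ_[p]) * y : ℤ_[p]) : ℚ_[p]) = ((1 : ℤ_[p]) : ℚ_[p]) := by rw [h6]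
  push_cast at this
  exact this
private theorem tend_bpow' : Tendsto (fun m : ℕ => (p : ℝ) ^ (-(m : ℤ))) atTop (𝓝 0) := by
  have hp1 : (1 : ℝ) < p := by exact_mod_cast (Fact.out : p.Prime).one_lt
  have h0 : (0 : ℝ) ≤ (p : ℝ)⁻¹ := by positivity
  have h1 : (p : ℝ)⁻¹ < 1 := by rw [inv_lt_one_iff₀]; right; exact hp1
  have h2 := tendsto_pow_atTop_nhds_zero_of_lt_one h0 h1
  convert h2 using 2 with m
  rw [zpow_neg, zpow_natCast, ← inv_pow]

private theorem surj (hp : Odd p) {φ : ℚ_[p]ˣ → ℤ_[p]}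
    (hhom : ∀ a b : ℚ_[p]ˣ, φ (a * b) = φ a + φ b) (hcont : Continuous φ) (x : ℤ_[p]) :
    ∃ (U : ℚ_[p]ˣ) (y : ℤ_[p]), (U : ℚ_[p]) = 1 + p * y ∧ φ U = x * φ (gu p) := by
  have hp0 : (p : ℝ) ≠ 0 := by
    have := (Fact.out : p.Prime).pos; positivity
  set s : ℕ → ℤ_[p] := fun m => (1 + p : ℤ_[p]) ^ (x.appr m) with hs
  have hdiff : ∀ {N n m : ℕ}, N ≤ m → m ≤ n → ‖s n - s m‖ ≤ (p : ℝ) ^ (-(N + 1) : ℤ) := by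
    intro N n m hNm hmn
    obtain ⟨d, hd⟩ := Nat.exists_eq_add_of_le (x.appr_mono hmn)
    have hdvd : ((p : ℤ_[p]) ^ N) ∣ ((d : ℕ) : ℤ_[p]) := by
      have h1 := x.appr_spec m
      have h2 := x.appr_spec n
      rw [Ideal.mem_span_singleton] at h1 h2
      have h3 : ((d : ℕ) : ℤ_[p]) = (x - x.appr m) - (x - x.appr n) := by
        rw [hd]; push_cast; ring
      rw [h3]
      exact dvd_sub (dvd_trans (pow_dvd_pow _ hNm) h1)
        (dvd_trans (pow_dvd_pow _ (le_trans hNm hmn)) h2)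
    have hnd : ‖((d : ℕ) : ℤ_[p])‖ ≤ (p : ℝ) ^ (-(N : ℤ)) := by
      rw [show (-(N : ℤ)) = -((N : ℕ) : ℤ) by simp, PadicInt.norm_le_pow_iff_mem_span_pow,
        Ideal.mem_span_singleton]
      exact hdvd
    have hfac : s n - s m = s m * ((1 + p : ℤ_[p]) ^ d - 1) := by
      rw [hs]; simp only; rw [hd, pow_add]; ring
    rw [hfac, norm_mul]
    calc ‖s m‖ * ‖(1 + p : ℤ_[p]) ^ d - 1‖
        ≤ 1 * (‖((d : ℕ) : ℤ_[p])‖ * (p : ℝ)⁻¹) :=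
          mul_le_mul (PadicInt.norm_le_one _) (key_norm_le hp d) (norm_nonneg _) zero_le_one
      _ ≤ 1 * ((p : ℝ) ^ (-(N : ℤ)) * (p : ℝ)⁻¹) := by gcongr
      _ = (p : ℝ) ^ (-(N + 1) : ℤ) := by
          rw [one_mul, show (-(N + 1) : ℤ) = (-(N : ℤ)) + (-1) by ring, zpow_add₀ hp0,
            zpow_neg_one]
  have hcseq : CauchySeq s := by
    apply cauchySeq_of_le_tendsto_0 (fun N : ℕ => (p : ℝ) ^ (-(N + 1) : ℤ)) ?_ (tend_bpow (p := p))
    intro n m N hn hm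
    rw [dist_eq_norm]
    rcases le_total m n with h | h
    · exact hdiff hm h
    · rw [← norm_neg]
      rw [show -(s n - s m) = s m - s n by ring]
      exact hdiff hn h
  obtain ⟨u, hu⟩ := cauchySeq_tendsto_of_complete hcseq
  have hdvdu : (p : ℤ_[p]) ∣ u - 1 := by
    rw [← PadicInt.norm_lt_one_iff_dvd]
    have h1 : Tendsto (fun m => ‖s m - 1‖) atTop (𝓝 ‖u - 1‖) :=
      ((hu.sub tendsto_const_nhds).norm)
    have h2 : ∀ m, ‖s m - 1‖ ≤ (p : ℝ)⁻¹ := by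
      intro m
      obtain ⟨e, he⟩ := key_dvd_sub_one hp (x.appr m)
      rw [hs]; simp only; rw [he, norm_mul, PadicInt.norm_p]
      calc (p : ℝ)⁻¹ * ‖e‖ ≤ (p : ℝ)⁻¹ * 1 := by gcongr; exact PadicInt.norm_le_one e
        _ = (p : ℝ)⁻¹ := mul_one _
    have h3 : ‖u - 1‖ ≤ (p : ℝ)⁻¹ := le_of_tendsto h1 (Eventually.of_forall h2)
    have h4 : (p : ℝ)⁻¹ < 1 := by
      rw [inv_lt_one_iff₀]; right; exact_mod_cast (Fact.out : p.Prime).one_lt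
    exact lt_of_le_of_lt h3 h4
  obtain ⟨y, hy⟩ := hdvdu
  have huy : u = 1 + (p : ℤ_[p]) * y := by rw [← hy]; ring
  have hune : (u : ℚ_[p]) ≠ 0 := by rw [huy]; push_cast; exact_mod_cast gQ_ne y
  refine ⟨Units.mk0 (u : ℚ_[p]) hune, y, ?_, ?_⟩
  · show ((u : ℤ_[p]) : ℚ_[p]) = 1 + (p : ℚ_[p]) * y
    rw [huy]; push_cast; ring
  · set U : ℚ_[p]ˣ := Units.mk0 (u : ℚ_[p]) hune with hUdef
    have hUt : Tendsto (fun m => gu p ^ (x.appr m)) atTop (𝓝 U) := by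
      rw [Units.isEmbedding_val₀.tendsto_nhds_iff]
      have hcomp : (Units.val ∘ fun m => gu p ^ x.appr m) = fun m => ((s m : ℤ_[p]) : ℚ_[p]) := by
        funext m; exact gu_pow_coe _
      rw [hcomp]
      show Tendsto _ atTop (𝓝 ((u : ℤ_[p]) : ℚ_[p]))
      exact tendsto_coeQ hu
    have h5 : Tendsto (fun m => φ (gu p ^ x.appr m)) atTop (𝓝 (φ U)) :=
      (hcont.tendsto U).comp hUt
    have h6 : (fun m => φ (gu p ^ x.appr m))
        = fun m => ((x.appr m : ℕ) : ℤ_[p]) * φ (gu p) :=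
      funext fun m => phi_pow hhom _ _
    rw [h6] at h5
    have h7 : Tendsto (fun m => ((x.appr m : ℕ) : ℤ_[p]) * φ (gu p)) atTop (𝓝 (x * φ (gu p))) := by
      apply Tendsto.mul_const
      apply tendsto_sub_nhds_zero_iff.mp
      apply squeeze_zero_norm ?_ (tend_bpow' (p := p))
      intro m
      rw [show ((x.appr m : ℕ) : ℤ_[p]) - x = -(x - x.appr m) by ring, norm_neg,
        show (-(m : ℤ)) = -((m : ℕ) : ℤ) by simp, PadicInt.norm_le_pow_iff_mem_span_pow]
      exact x.appr_spec m
    exact tendsto_nhds_unique h5 h7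

private theorem PU_mul {U V : ℚ_[p]ˣ} (hU : ∃ y : ℤ_[p], (U : ℚ_[p]) = 1 + p * y)
    (hV : ∃ y : ℤ_[p], (V : ℚ_[p]) = 1 + p * y) :
    ∃ y : ℤ_[p], ((U * V : ℚ_[p]ˣ) : ℚ_[p]) = 1 + p * y := by
  obtain ⟨a, ha⟩ := hU
  obtain ⟨b, hb⟩ := hV
  refine ⟨a + b + p * (a * b), ?_⟩
  rw [Units.val_mul, ha, hb]
  push_cast
  ring

private theorem PU_inv {U : ℚ_[p]ˣ} (hU : ∃ y : ℤ_[p], (U : ℚ_[p]) = 1 + p * y) :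
    ∃ y : ℤ_[p], ((U⁻¹ : ℚ_[p]ˣ) : ℚ_[p]) = 1 + p * y := by
  obtain ⟨a, ha⟩ := hU
  have hunit : IsUnit (1 + (p : ℤ_[p]) * a) := by
    rw [PadicInt.isUnit_iff]; exact norm_one_add_pmul a
  obtain ⟨V, hV⟩ := hunit
  refine ⟨-(a * ↑V⁻¹), ?_⟩
  have hmul : (1 + (p : ℤ_[p]) * a) * (1 + (p : ℤ_[p]) * (-(a * ↑V⁻¹))) = 1 := by
    have hVV : (1 + (p : ℤ_[p]) * a) * ↑V⁻¹ = 1 := by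
      rw [← hV, ← Units.val_mul, mul_inv_cancel, Units.val_one]
    calc (1 + (p : ℤ_[p]) * a) * (1 + (p : ℤ_[p]) * (-(a * ↑V⁻¹)))
        = (1 + (p : ℤ_[p]) * a) - (p : ℤ_[p]) * a * ((1 + (p : ℤ_[p]) * a) * ↑V⁻¹) := by ring
      _ = 1 := by rw [hVV]; ring
  have hQ : (((1 + (p : ℤ_[p]) * a) * (1 + (p : ℤ_[p]) * (-(a * ↑V⁻¹))) : ℤ_[p]) : ℚ_[p])
      = ((1 : ℤ_[p]) : ℚ_[p]) := by rw [hmul]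
  rw [Units.val_inv_eq_inv_val, ha]
  apply inv_eq_of_mul_eq_one_right
  push_cast at hQ ⊢
  exact hQ

private theorem PU_pow {U : ℚ_[p]ˣ} (hU : ∃ y : ℤ_[p], (U : ℚ_[p]) = 1 + p * y) (n : ℕ) :
    ∃ y : ℤ_[p], ((U ^ n : ℚ_[p]ˣ) : ℚ_[p]) = 1 + p * y := by
  induction n with
  | zero => exact ⟨0, by simp⟩
  | succ n ih =>
    rw [pow_succ]
    exact PU_mul ih hU

private theorem PU_zpow {U : ℚ_[p]ˣ} (hU : ∃ y : ℤ_[p], (U : ℚ_[p]) = 1 + p * y) (n : ℤ) :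
    ∃ y : ℤ_[p], ((U ^ n : ℚ_[p]ˣ) : ℚ_[p]) = 1 + p * y := by
  cases n with
  | ofNat k => rw [Int.ofNat_eq_coe, zpow_natCast]; exact PU_pow hU k
  | negSucc k => rw [zpow_negSucc]; exact PU_inv (PU_pow hU (k + 1))
private theorem phi_torsion {φ : ℚ_[p]ˣ → ℤ_[p]}
    (hhom : ∀ a b : ℚ_[p]ˣ, φ (a * b) = φ a + φ b) (Z : ℚ_[p]ˣ) (hZ : Z ^ (p - 1) = 1) :
    φ Z = 0 := by
  have h := phi_pow hhom Z (p - 1)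
  rw [hZ, phi_one hhom] at h
  have hne : ((p - 1 : ℕ) : ℤ_[p]) ≠ 0 := by
    have h2 := (Fact.out : p.Prime).two_le
    exact Nat.cast_ne_zero.mpr (by omega)
  rcases mul_eq_zero.mp h.symm with h' | h'
  · exact absurd h' hne
  · exact h'

/-- Lemma 3.8 of the paper: the kernel of a continuous homomorphism
`φ : ℚ_pˣ → (ℤ_p, +)` which is nontrivial on the principal units `1 + pℤ_p`
has the form `μ_{p-1} × (p^k·s)^ℤ` with `k ≥ 1` and `s ∈ 1 + pℤ_p`. -/
theorem stmt_0 (p : ℕ) [Fact p.Prime] (hp : Odd p)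
    (φ : ℚ_[p]ˣ → ℤ_[p])
    (hhom : ∀ a b : ℚ_[p]ˣ, φ (a * b) = φ a + φ b)
    (hcont : Continuous φ)
    (hnt : ∃ u : ℚ_[p]ˣ, (∃ y : ℤ_[p], (u : ℚ_[p]) = 1 + p * y) ∧ φ u ≠ 0) :
    ∃ (k : ℕ) (s : ℤ_[p]), 1 ≤ k ∧ (∃ y : ℤ_[p], s = 1 + p * y) ∧
      ∀ q : ℚ_[p]ˣ, φ q = 0 ↔
        ∃ (ζ : ℚ_[p]) (n : ℤ), ζ ^ (p - 1) = 1 ∧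
          (q : ℚ_[p]) = ζ * ((p : ℚ_[p]) ^ k * (s : ℚ_[p])) ^ n := by
  classical
  have hprime := (Fact.out : p.Prime)
  have hpQ : (p : ℚ_[p]) ≠ 0 := Nat.cast_ne_zero.mpr hprime.pos.ne'
  have hp0R : (p : ℝ) ≠ 0 := Nat.cast_ne_zero.mpr hprime.pos.ne'
  set π : ℚ_[p]ˣ := Units.mk0 (p : ℚ_[p]) hpQ with hπ
  set c := φ (gu p) with hc
  have hcne : c ≠ 0 := c_ne_zero hp hhom hcont hnt
  set a := φ π with ha
  set d : ℕ := if a = 0 then 0 else c.valuation - a.valuation with hd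
  set k : ℕ := p ^ d with hk
  have hk1 : 1 ≤ k := Nat.one_le_pow _ _ hprime.pos
  -- c ∣ k * a
  have hdvdka : c ∣ ((k : ℤ_[p]) * a) := by
    by_cases haz : a = 0
    · rw [haz, mul_zero]; exact dvd_zero c
    · apply dvd_of_norm_le hcne
      rw [norm_mul, PadicInt.norm_eq_zpow_neg_valuation haz, PadicInt.norm_eq_zpow_neg_valuation hcne]
      have hkn : ‖((k : ℕ) : ℤ_[p])‖ ≤ (p : ℝ) ^ (-(d : ℤ)) := by
        have hkd : ((k : ℕ) : ℤ_[p]) = (p : ℤ_[p]) ^ d := by rw [hk]; push_cast; ring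
        rw [hkd, PadicInt.norm_p_pow]
      calc ‖((k : ℕ) : ℤ_[p])‖ * (p : ℝ) ^ (-(a.valuation : ℤ))
          ≤ (p : ℝ) ^ (-(d : ℤ)) * (p : ℝ) ^ (-(a.valuation : ℤ)) := by
            gcongr
        _ ≤ (p : ℝ) ^ (-(c.valuation : ℤ)) := by
            rw [← zpow_add₀ hp0R]
            apply zpow_le_zpow_right₀ (by exact_mod_cast hprime.one_le)
            have hdge : (d : ℤ) ≥ (c.valuation : ℤ) - (a.valuation : ℤ) := by
              rw [hd, if_neg haz]
              omega
            omega
  obtain ⟨x₀, hx₀⟩ := hdvdka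
  obtain ⟨S, ys, hS, hphiS⟩ := surj hp hhom hcont (-x₀)
  have hphiS' : φ S = -((k : ℤ_[p]) * a) := by rw [hphiS, hx₀, ← hc]; ring
  refine ⟨k, 1 + p * ys, hk1, ⟨ys, rfl⟩, ?_⟩
  have hsQ : ((1 + p * ys : ℤ_[p]) : ℚ_[p]) = (S : ℚ_[p]) := by rw [hS]; push_cast; ring
  intro q
  constructor
  · intro hq0
    set v := Padic.valuation (q : ℚ_[p]) with hv
    have hqne : (q : ℚ_[p]) ≠ 0 := Units.ne_zero q
    set W : ℚ_[p]ˣ := q * π ^ (-v) with hW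
    have hπz : ((π ^ (-v) : ℚ_[p]ˣ) : ℚ_[p]) = (p : ℚ_[p]) ^ (-v) := by
      rw [Units.val_zpow_eq_zpow_val, hπ, Units.val_mk0]
    have hWnorm : ‖(W : ℚ_[p])‖ = 1 := by
      rw [hW, Units.val_mul, norm_mul, hπz, Padic.norm_p_zpow,
        Padic.norm_eq_zpow_neg_valuation hqne, ← hv, neg_neg, ← zpow_add₀ hp0R, neg_add_cancel, zpow_zero]
    set w : ℤ_[p] := ((PadicInt.mkUnits hWnorm : ℤ_[p]ˣ) : ℤ_[p]) with hw
    have hwnorm : ‖w‖ = 1 := PadicInt.norm_units _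
    have hwQ : ((w : ℤ_[p]) : ℚ_[p]) = (W : ℚ_[p]) := PadicInt.mkUnits_eq hWnorm
    obtain ⟨ζ, u, hζpow, hζnorm, hudvd, hwzu⟩ := teich hp w hwnorm
    have hζQne : (ζ : ℚ_[p]) ≠ 0 := by
      intro h0
      have hn : ‖(ζ : ℚ_[p])‖ = 1 := by rw [PadicInt.padic_norm_e_of_padicInt, hζnorm]
      rw [h0] at hn; simp at hn
    set Z : ℚ_[p]ˣ := Units.mk0 (ζ : ℚ_[p]) hζQne with hZ
    obtain ⟨yu, hyu⟩ := hudvd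
    have huy : u = 1 + (p : ℤ_[p]) * yu := by rw [← hyu]; ring
    have huQne : (u : ℚ_[p]) ≠ 0 := by rw [huy]; exact_mod_cast gQ_ne yu
    set Uu : ℚ_[p]ˣ := Units.mk0 (u : ℚ_[p]) huQne with hUu
    have huq : (Uu : ℚ_[p]) = 1 + p * yu := by
      show (u : ℚ_[p]) = 1 + (p : ℚ_[p]) * yu
      rw [huy]; push_cast; ring
    have hqfact : q = π ^ (v : ℤ) * (Z * Uu) := by
      apply Units.ext
      rw [Units.val_mul, Units.val_mul, Units.val_zpow_eq_zpow_val]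
      have h1 : (Z : ℚ_[p]) * (Uu : ℚ_[p]) = (W : ℚ_[p]) := by
        rw [← hwQ]
        show (ζ : ℚ_[p]) * (u : ℚ_[p]) = ((w : ℤ_[p]) : ℚ_[p])
        rw [hwzu]; push_cast; ring
      rw [h1, hW, Units.val_mul, hπz]
      show (q : ℚ_[p]) = ((π : ℚ_[p]ˣ) : ℚ_[p]) ^ (v : ℤ) * ((q : ℚ_[p]) * (p : ℚ_[p]) ^ (-v))
      show (q : ℚ_[p]) = (p : ℚ_[p]) ^ (v : ℤ) * ((q : ℚ_[p]) * (p : ℚ_[p]) ^ (-v))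
      rw [mul_comm ((p : ℚ_[p]) ^ (v : ℤ)), mul_assoc, ← zpow_add₀ hpQ, neg_add_cancel,
        zpow_zero, mul_one]
    have hphiZ : φ Z = 0 := by
      apply phi_torsion hhom
      apply Units.ext
      rw [Units.val_pow_eq_pow_val, Units.val_one]
      show ((ζ : ℚ_[p])) ^ (p - 1) = 1
      have hcast := congrArg (fun z : ℤ_[p] => (z : ℚ_[p])) hζpow
      push_cast at hcast
      exact_mod_cast hcast
    have hphiq : (v : ℤ_[p]) * a + φ Uu = 0 := by
      rw [hqfact, hhom, hhom, phi_zpow hhom, hphiZ, ← ha] at hq0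
      rw [← hq0]; ring
    have hmem : c ∣ φ Uu := mem_c hp hhom hcont huq
    have hkv : ((k : ℕ) : ℤ) ∣ v := by
      by_cases haz : a = 0
      · have : k = 1 := by rw [hk, hd, if_pos haz, pow_zero]
        rw [this]; exact one_dvd _
      · set mc := c.valuation with hmc
        set ma := a.valuation with hma
        have hdeq : d = mc - ma := by rw [hd, if_neg haz]
        obtain ⟨x, hx⟩ := hmem
        have hva : (v : ℤ_[p]) * a = c * (-x) := by
          have h5 : -(φ Uu) = (v : ℤ_[p]) * a := neg_eq_of_add_eq_zero_left hphiq
          rw [← h5, hx]; ring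
        have hpmc : (p : ℤ_[p]) ^ mc ∣ (v : ℤ_[p]) * a := by
          rw [hva]
          exact Dvd.dvd.mul_right ⟨(PadicInt.unitCoeff hcne : ℤ_[p]), by
            rw [mul_comm]; exact PadicInt.unitCoeff_spec hcne⟩ _
        have hnle : ‖(v : ℤ_[p]) * a‖ ≤ (p : ℝ) ^ (-(mc : ℤ)) := by
          rw [show (-(mc : ℤ)) = -((mc : ℕ) : ℤ) by simp,
            PadicInt.norm_le_pow_iff_mem_span_pow, Ideal.mem_span_singleton]
          exact hpmc
        have hanorm : ‖a‖ = (p : ℝ) ^ (-(ma : ℤ)) := by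
          rw [PadicInt.norm_eq_zpow_neg_valuation haz]
        rw [norm_mul, hanorm] at hnle
        by_cases hmam : ma ≤ mc
        · have hvb : ‖((v : ℤ) : ℤ_[p])‖ ≤ (p : ℝ) ^ (-(d : ℤ)) := by
            calc ‖((v : ℤ) : ℤ_[p])‖
                = (‖((v : ℤ) : ℤ_[p])‖ * (p : ℝ) ^ (-(ma : ℤ))) * (p : ℝ) ^ ((ma : ℤ)) := by
                  rw [mul_assoc, ← zpow_add₀ hp0R, neg_add_cancel, zpow_zero, mul_one]
              _ ≤ (p : ℝ) ^ (-(mc : ℤ)) * (p : ℝ) ^ ((ma : ℤ)) := by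
                  gcongr
              _ = (p : ℝ) ^ (-(d : ℤ)) := by
                  rw [← zpow_add₀ hp0R]
                  congr 1
                  rw [hdeq, Nat.cast_sub hmam]
                  ring
          have := (PadicInt.norm_int_le_pow_iff_dvd (k := v) (n := d)).mp hvb
          rw [hk]
          exact_mod_cast this
        · have hd0 : d = 0 := by rw [hdeq]; omega
          rw [hk, hd0, pow_zero]
          exact one_dvd _
    obtain ⟨n, hn⟩ := hkv
    have hUS : Uu = S ^ n := by
      have hker : φ (Uu * (S ^ n)⁻¹) = 0 := by
        rw [hhom, phi_inv hhom, phi_zpow hhom, hphiS']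
        have hUuval : φ Uu = -((v : ℤ_[p]) * a) := eq_neg_of_add_eq_zero_right hphiq
        have hvcast : ((v : ℤ) : ℤ_[p]) = (k : ℤ_[p]) * ((n : ℤ) : ℤ_[p]) := by
          rw [hn]; push_cast; ring
        rw [hUuval, hvcast]
        ring
      have hPU : ∃ y : ℤ_[p], ((Uu * (S ^ n)⁻¹ : ℚ_[p]ˣ) : ℚ_[p]) = 1 + p * y :=
        PU_mul ⟨yu, huq⟩ (PU_inv (PU_zpow ⟨ys, hS⟩ n))
      obtain ⟨yy, hyy⟩ := hPU
      have h1 := inj hp hhom hcont hcne hyy hker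
      exact mul_inv_eq_one.mp h1
    have hζQ : ((ζ : ℚ_[p])) ^ (p - 1) = 1 := by
      have hcast := congrArg (fun z : ℤ_[p] => (z : ℚ_[p])) hζpow
      push_cast at hcast
      exact_mod_cast hcast
    refine ⟨(ζ : ℚ_[p]), n, hζQ, ?_⟩
    have hqu : q = Z * (π ^ (k : ℕ) * S) ^ n := by
      rw [hqfact, hUS]
      have hπv : (π : ℚ_[p]ˣ) ^ (v : ℤ) = (π ^ (k : ℕ)) ^ (n : ℤ) := by
        rw [← zpow_natCast π k, ← zpow_mul, ← hn]
      rw [hπv, mul_zpow]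
      exact mul_left_comm _ _ _
    calc (q : ℚ_[p]) = (Z : ℚ_[p]) * (((π ^ (k : ℕ) * S : ℚ_[p]ˣ)) : ℚ_[p]) ^ n := by
          rw [hqu, Units.val_mul, Units.val_zpow_eq_zpow_val]
      _ = (ζ : ℚ_[p]) * ((p : ℚ_[p]) ^ k * ((1 + p * ys : ℤ_[p]) : ℚ_[p])) ^ n := by
          have hval : ((π ^ (k : ℕ) * S : ℚ_[p]ˣ) : ℚ_[p])
              = (p : ℚ_[p]) ^ k * ((1 + p * ys : ℤ_[p]) : ℚ_[p]) := by
            rw [Units.val_mul, Units.val_pow_eq_pow_val, hπ, Units.val_mk0, hsQ]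
          rw [hval, hZ, Units.val_mk0]
  · rintro ⟨ζq, n, hζq, hq⟩
    have hp1ne : p - 1 ≠ 0 := by have := hprime.two_le; omega
    have hζne : ζq ≠ 0 := by
      intro h0; rw [h0, zero_pow hp1ne] at hζq; exact zero_ne_one hζq
    set Z : ℚ_[p]ˣ := Units.mk0 ζq hζne with hZ
    have hZpow : Z ^ (p - 1) = 1 := by
      apply Units.ext
      rw [Units.val_pow_eq_pow_val, Units.val_one]
      exact hζq
    set R : ℚ_[p]ˣ := π ^ (k : ℕ) * S with hR
    have hqu : q = Z * R ^ n := by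
      apply Units.ext
      have hval : ((R : ℚ_[p]ˣ) : ℚ_[p])
          = (p : ℚ_[p]) ^ k * ((1 + p * ys : ℤ_[p]) : ℚ_[p]) := by
        rw [hR, Units.val_mul, Units.val_pow_eq_pow_val, hπ, Units.val_mk0, hsQ]
      rw [Units.val_mul, Units.val_zpow_eq_zpow_val, hval]
      exact hq
    have hphiR : φ R = 0 := by
      rw [hR, hhom, phi_pow hhom, ← ha, hphiS']
      ring
    rw [hqu, hhom, phi_torsion hhom Z hZpow, phi_zpow hhom, hphiR]
    ring
end

section
/- Let p be an odd prime, let k ≥ 1 be an integer, let s ∈ 1+pℤ_p, and set N := {ζ·(p^k·s)^n : ζ ∈ μ_{p−1}, n ∈ ℤ} ⊆ ℚ_pˣ. Let π ∈ ℚ_pˣ be an element whose p-adic valuation is a multiple of k, say v_p(π) = k·m with m ∈ ℤ. Then there exists a unique x ∈ 1+pℤ_p such that π·x ∈ N. -/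
private lemma aux_toZMod_zero {p : ℕ} [Fact p.Prime] (x : ℤ_[p]) :
    PadicInt.toZMod x = 0 ↔ ‖x‖ < 1 := by
  rw [← RingHom.mem_ker, PadicInt.ker_toZMod, PadicInt.maximalIdeal_eq_span_p,
    Ideal.mem_span_singleton, ← PadicInt.norm_lt_one_iff_dvd]

private lemma aux_norm_one {p : ℕ} [Fact p.Prime] {x : ℤ_[p]}
    (h : PadicInt.toZMod x ≠ 0) : ‖x‖ = 1 := by
  rcases lt_or_eq_of_le x.2 with h1 | h1
  · exact absurd ((aux_toZMod_zero x).2 h1) h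
  · exact h1

private lemma aux_toZMod_one {p : ℕ} [Fact p.Prime] {x y : ℤ_[p]}
    (h : x = 1 + p * y) : PadicInt.toZMod x = 1 := by
  have hp : PadicInt.toZMod ((p : ℤ_[p]) * y) = 0 := by
    rw [aux_toZMod_zero, PadicInt.norm_lt_one_iff_dvd]
    exact ⟨y, rfl⟩
  rw [h, map_add, map_one, hp, add_zero]

/-- Proposition 3.12 of the paper: with `N = μ_{p-1} × (p^k·s)^ℤ` (`k ≥ 1`,
`s ∈ 1 + pℤ_p`) the group of universal norms, and `π ∈ ℚ_pˣ` of valuation a multiple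
of `k`, there is a unique principal unit `x ∈ 1 + pℤ_p` with `π·x ∈ N`. -/
theorem stmt_3 (p : ℕ) [Fact p.Prime] (hp : Odd p)
    (k : ℕ) (hk : 1 ≤ k) (s : ℤ_[p]) (hs : ∃ y : ℤ_[p], s = 1 + p * y)
    (π : ℚ_[p]) (hπ : π ≠ 0) (m : ℤ) (hval : π.valuation = k * m) :
    ∃! x : ℤ_[p], (∃ y : ℤ_[p], x = 1 + p * y) ∧
      ∃ (ζ : ℚ_[p]) (n : ℤ), ζ ^ (p - 1) = 1 ∧
        π * (x : ℚ_[p]) = ζ * ((p : ℚ_[p]) ^ k * (s : ℚ_[p])) ^ n := by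
  have hp2 : 2 ≤ p := (Fact.out : p.Prime).two_le
  have hppos : (0 : ℝ) < p := by positivity
  have hpQ : (p : ℚ_[p]) ≠ 0 := by
    exact_mod_cast (Nat.cast_ne_zero (R := ℚ_[p])).2 (Fact.out : p.Prime).ne_zero
  have hsZ : PadicInt.toZMod s = 1 := by
    obtain ⟨y, hy⟩ := hs; exact aux_toZMod_one hy
  have hsn : ‖s‖ = 1 := aux_norm_one (by rw [hsZ]; exact one_ne_zero)
  -- the unit part of π
  set u : ℚ_[p] := π * (p : ℚ_[p]) ^ (-(k * m : ℤ)) with hu_def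
  have hu_norm : ‖u‖ = 1 := by
    rw [hu_def, norm_mul, Padic.norm_p_zpow, Padic.norm_eq_zpow_neg_valuation hπ, hval, neg_neg,
      ← zpow_add₀ (ne_of_gt hppos), neg_add_cancel, zpow_zero]
  set u' : ℤ_[p] := ⟨u, le_of_eq hu_norm⟩ with hu'_def
  have hu'_norm : ‖u'‖ = 1 := hu_norm
  have hu'Z : PadicInt.toZMod u' ≠ 0 := by
    intro h
    rw [aux_toZMod_zero] at h
    rw [hu'_norm] at h
    exact lt_irrefl 1 h
  -- Hensel's lemma to get a (p-1)-st root of unity congruent to u'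
  obtain ⟨z, hz_root, hz_close, -, -⟩ :
      ∃ z : ℤ_[p], (Polynomial.X ^ (p - 1) - 1 : Polynomial ℤ_[p]).eval z = 0 ∧
        ‖z - u'‖ < ‖(Polynomial.X ^ (p - 1) - 1 : Polynomial ℤ_[p]).derivative.eval u'‖ ∧
        ‖(Polynomial.X ^ (p - 1) - 1 : Polynomial ℤ_[p]).derivative.eval z‖ =
          ‖(Polynomial.X ^ (p - 1) - 1 : Polynomial ℤ_[p]).derivative.eval u'‖ ∧
        ∀ z', (Polynomial.X ^ (p - 1) - 1 : Polynomial ℤ_[p]).eval z' = 0 →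
          ‖z' - u'‖ < ‖(Polynomial.X ^ (p - 1) - 1 : Polynomial ℤ_[p]).derivative.eval u'‖ →
            z' = z := by
    apply hensels_lemma
    have hderiv : (Polynomial.X ^ (p - 1) - 1 : Polynomial ℤ_[p]).derivative =
        Polynomial.C ((p - 1 : ℕ) : ℤ_[p]) * Polynomial.X ^ (p - 2) := by
      rw [Polynomial.derivative_sub, Polynomial.derivative_one, sub_zero,
        Polynomial.derivative_X_pow, Nat.sub_sub]
    have hpm1 : PadicInt.toZMod ((p - 1 : ℕ) : ℤ_[p]) ≠ 0 := by
      rw [map_natCast, Ne, ZMod.natCast_eq_zero_iff]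
      intro hdvd
      have := Nat.le_of_dvd (by omega) hdvd
      omega
    have hdn : ‖(Polynomial.X ^ (p - 1) - 1 : Polynomial ℤ_[p]).derivative.eval u'‖ = 1 := by
      rw [hderiv]
      simp only [Polynomial.eval_mul, Polynomial.eval_C, Polynomial.eval_pow,
        Polynomial.eval_X]
      rw [norm_mul, norm_pow, hu'_norm, one_pow, mul_one]
      exact aux_norm_one hpm1
    rw [Polynomial.coe_aeval_eq_eval]
    rw [hdn, one_pow]
    simp only [Polynomial.eval_sub, Polynomial.eval_pow, Polynomial.eval_X, Polynomial.eval_one]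
    rw [← aux_toZMod_zero]
    rw [map_sub, map_pow, map_one, ZMod.pow_card_sub_one_eq_one hu'Z, sub_self]
  simp only [Polynomial.eval_sub, Polynomial.eval_pow, Polynomial.eval_X,
    Polynomial.eval_one, sub_eq_zero] at hz_root
  -- hz_root : z ^ (p - 1) = 1
  have hzZ : PadicInt.toZMod z = PadicInt.toZMod u' := by
    have : PadicInt.toZMod (z - u') = 0 := by
      rw [aux_toZMod_zero]
      calc ‖z - u'‖ < _ := hz_close
        _ ≤ 1 := PadicInt.norm_le_one _
    rw [map_sub, sub_eq_zero] at this
    exact this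
  -- units
  have hzu : IsUnit z := by
    refine isUnit_iff_exists_inv.2 ⟨z ^ (p - 2), ?_⟩
    rw [← pow_succ']
    have : p - 2 + 1 = p - 1 := by omega
    rw [this, hz_root]
  have hsu : IsUnit s := PadicInt.isUnit_iff.2 hsn
  have huu : IsUnit u' := PadicInt.isUnit_iff.2 hu'_norm
  obtain ⟨Z, hZ⟩ := hzu
  obtain ⟨S, hS⟩ := hsu
  obtain ⟨U, hU⟩ := huu
  set X : ℤ_[p]ˣ := Z * S ^ m * U⁻¹ with hX_def
  set x : ℤ_[p] := (X : ℤ_[p]) with hx_def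
  -- x is a principal unit
  have hxZ : PadicInt.toZMod x = 1 := by
    have : PadicInt.toZMod x =
        ((Units.map (PadicInt.toZMod : ℤ_[p] →+* ZMod p).toMonoidHom) X : ZMod p) := rfl
    rw [this, hX_def, map_mul, map_mul, map_zpow, map_inv]
    have hZS : (Units.map (PadicInt.toZMod : ℤ_[p] →+* ZMod p).toMonoidHom) S = 1 := by
      ext
      simp only [Units.coe_map, RingHom.toMonoidHom_eq_coe, MonoidHom.coe_coe, Units.val_one]
      rw [hS]
      exact hsZ
    have hZZ : (Units.map (PadicInt.toZMod : ℤ_[p] →+* ZMod p).toMonoidHom) Z =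
        (Units.map (PadicInt.toZMod : ℤ_[p] →+* ZMod p).toMonoidHom) U := by
      ext
      simp only [Units.coe_map, RingHom.toMonoidHom_eq_coe, MonoidHom.coe_coe]
      rw [hZ, hU]
      exact hzZ
    rw [hZS, one_zpow, mul_one, hZZ]
    simp
  have hx_principal : ∃ y : ℤ_[p], x = 1 + p * y := by
    have h0 : PadicInt.toZMod (x - 1) = 0 := by rw [map_sub, map_one, hxZ, sub_self]
    rw [aux_toZMod_zero, PadicInt.norm_lt_one_iff_dvd] at h0
    obtain ⟨y, hy⟩ := h0
    exact ⟨y, by rw [← hy]; ring⟩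
  -- the equation
  have hcoe : ∀ W : ℤ_[p]ˣ, ((W : ℤ_[p]) : ℚ_[p]) =
      ((Units.map (PadicInt.Coe.ringHom : ℤ_[p] →+* ℚ_[p]).toMonoidHom) W : ℚ_[p]) :=
    fun W => rfl
  have hx_eq : (x : ℚ_[p]) = (z : ℚ_[p]) * (s : ℚ_[p]) ^ m * u⁻¹ := by
    rw [hx_def, hcoe, hX_def, map_mul, map_mul, map_zpow, map_inv]
    rw [Units.val_mul, Units.val_mul, Units.val_zpow_eq_zpow_val, Units.val_inv_eq_inv_val]
    have e1 : ((Units.map (PadicInt.Coe.ringHom : ℤ_[p] →+* ℚ_[p]).toMonoidHom) Z : ℚ_[p])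
        = (z : ℚ_[p]) := by rw [← hZ]; rfl
    have e2 : ((Units.map (PadicInt.Coe.ringHom : ℤ_[p] →+* ℚ_[p]).toMonoidHom) S : ℚ_[p])
        = (s : ℚ_[p]) := by rw [← hS]; rfl
    have e3 : ((Units.map (PadicInt.Coe.ringHom : ℤ_[p] →+* ℚ_[p]).toMonoidHom) U : ℚ_[p])
        = u := by
      rw [show ((Units.map (PadicInt.Coe.ringHom : ℤ_[p] →+* ℚ_[p]).toMonoidHom) U : ℚ_[p])
        = (((U : ℤ_[p]) : ℤ_[p]) : ℚ_[p]) from rfl, hU]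
    rw [e1, e2, e3]
  have hzQ : ((z : ℚ_[p])) ^ (p - 1) = 1 := by
    have := congrArg (fun t : ℤ_[p] => (t : ℚ_[p])) hz_root
    push_cast at this
    exact_mod_cast this
  have hsQ : (s : ℚ_[p]) ≠ 0 := by
    intro h
    have h2 := PadicInt.padic_norm_e_of_padicInt s
    rw [h, norm_zero, hsn] at h2
    norm_num at h2
  have hmain : π * (x : ℚ_[p]) = (z : ℚ_[p]) * ((p : ℚ_[p]) ^ k * (s : ℚ_[p])) ^ m := by
    rw [hx_eq, hu_def]
    rw [mul_inv, zpow_neg, inv_inv]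
    rw [mul_zpow, ← zpow_natCast (p : ℚ_[p]) k, ← zpow_mul]
    field_simp
  -- uniqueness
  have key : ∀ a b : ℤ_[p],
      ((∃ y : ℤ_[p], a = 1 + p * y) ∧ ∃ (ζ : ℚ_[p]) (n : ℤ), ζ ^ (p - 1) = 1 ∧
        π * (a : ℚ_[p]) = ζ * ((p : ℚ_[p]) ^ k * (s : ℚ_[p])) ^ n) →
      ((∃ y : ℤ_[p], b = 1 + p * y) ∧ ∃ (ζ : ℚ_[p]) (n : ℤ), ζ ^ (p - 1) = 1 ∧
        π * (b : ℚ_[p]) = ζ * ((p : ℚ_[p]) ^ k * (s : ℚ_[p])) ^ n) → a = b := by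
    rintro a b ⟨⟨y₁, hy₁⟩, ζ₁, n₁, hζ₁, heq₁⟩ ⟨⟨y₂, hy₂⟩, ζ₂, n₂, hζ₂, heq₂⟩
    have hp1 : p - 1 ≠ 0 := by omega
    have haZ : PadicInt.toZMod a = 1 := aux_toZMod_one hy₁
    have hbZ : PadicInt.toZMod b = 1 := aux_toZMod_one hy₂
    have han : ‖a‖ = 1 := aux_norm_one (by rw [haZ]; exact one_ne_zero)
    have hbn : ‖b‖ = 1 := aux_norm_one (by rw [hbZ]; exact one_ne_zero)
    have hζn : ∀ ζ : ℚ_[p], ζ ^ (p - 1) = 1 → ‖ζ‖ = 1 := by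
      intro ζ hζ
      have h1 : ‖ζ‖ ^ (p - 1) = 1 := by rw [← norm_pow, hζ, norm_one]
      rcases lt_trichotomy ‖ζ‖ 1 with h | h | h
      · have h2 := pow_lt_one₀ (norm_nonneg ζ) h hp1
        exact absurd h1 h2.ne
      · exact h
      · have h2 := one_lt_pow₀ h hp1
        exact absurd h1 h2.ne'
    -- equal exponents
    have hB0 : (0 : ℝ) < ((p : ℝ))⁻¹ ^ k := by positivity
    have hB1 : ((p : ℝ))⁻¹ ^ k ≠ 1 := by
      have h1 : ((p : ℝ))⁻¹ < 1 := inv_lt_one_of_one_lt₀ (by exact_mod_cast (by omega : 1 < p))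
      exact ne_of_lt (pow_lt_one₀ (by positivity) h1 (by omega))
    have hnorm_base : ‖(p : ℚ_[p]) ^ k * (s : ℚ_[p])‖ = ((p : ℝ))⁻¹ ^ k := by
      rw [norm_mul, norm_pow, Padic.norm_p, ← PadicInt.norm_def, hsn, mul_one]
    have hexp : ∀ (c : ℤ_[p]) (ζ : ℚ_[p]) (n : ℤ), ‖c‖ = 1 → ζ ^ (p - 1) = 1 →
        π * (c : ℚ_[p]) = ζ * ((p : ℚ_[p]) ^ k * (s : ℚ_[p])) ^ n →
        ‖π‖ = (((p : ℝ))⁻¹ ^ k) ^ n := by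
      intro c ζ n hc hζ heq
      have this2 : ‖π * (c : ℚ_[p])‖ = ‖ζ * ((p : ℚ_[p]) ^ k * (s : ℚ_[p])) ^ n‖ := by
        rw [heq]
      rw [norm_mul, norm_mul, norm_zpow, hnorm_base, PadicInt.padic_norm_e_of_padicInt,
        hc, mul_one, hζn ζ hζ, one_mul] at this2
      exact this2
    have hn12 : n₁ = n₂ := by
      have h1 := hexp a ζ₁ n₁ han hζ₁ heq₁
      have h2 := hexp b ζ₂ n₂ hbn hζ₂ heq₂
      exact zpow_right_injective₀ hB0 hB1 (h1.symm.trans h2)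
    -- raise to the (p-1)-st power
    have hpow : ((a : ℚ_[p])) ^ (p - 1) = ((b : ℚ_[p])) ^ (p - 1) := by
      have h1 : (π * (a : ℚ_[p])) ^ (p - 1) = (((p : ℚ_[p]) ^ k * (s : ℚ_[p])) ^ n₁) ^ (p - 1) := by
        rw [heq₁, mul_pow, hζ₁, one_mul]
      have h2 : (π * (b : ℚ_[p])) ^ (p - 1) = (((p : ℚ_[p]) ^ k * (s : ℚ_[p])) ^ n₁) ^ (p - 1) := by
        rw [heq₂, mul_pow, hζ₂, one_mul, hn12]
      have h3 := h1.trans h2.symm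
      rw [mul_pow, mul_pow] at h3
      exact mul_left_cancel₀ (pow_ne_zero _ hπ) h3
    have hpowZ : a ^ (p - 1) = b ^ (p - 1) := by
      apply Subtype.coe_injective
      push_cast
      exact hpow
    -- geometric sum argument
    have hgeom := geom_sum₂_mul a b (p - 1)
    rw [hpowZ, sub_self] at hgeom
    have hsum : (∑ i ∈ Finset.range (p - 1), a ^ i * b ^ (p - 1 - 1 - i)) ≠ 0 := by
      intro h0
      have := congrArg PadicInt.toZMod h0
      rw [map_sum, map_zero] at this
      simp only [map_mul, map_pow, haZ, hbZ, one_pow, mul_one] at this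
      rw [Finset.sum_const, Finset.card_range, nsmul_eq_mul, mul_one] at this
      rw [ZMod.natCast_eq_zero_iff] at this
      have := Nat.le_of_dvd (by omega) this
      omega
    rcases mul_eq_zero.1 hgeom with h | h
    · exact absurd h hsum
    · exact sub_eq_zero.1 h
  exact ⟨x, ⟨hx_principal, (z : ℚ_[p]), m, hzQ, hmain⟩,
    fun w hw => key w x hw ⟨hx_principal, (z : ℚ_[p]), m, hzQ, hmain⟩⟩
end

section
/- Let p be a prime, let a, c ∈ ℤ_p with a ≠ 0, set m₀ := p^{max(0, v_p(a) − v_p(c))} (where m₀ := 1 if c = 0), and set z₀ := −m₀·c/a, which lies in ℤ_p. Then the subgroup {(z, m) ∈ ℤ_p × ℤ : a·z + c·m = 0} of the additive group ℤ_p × ℤ equals {(n·z₀, n·m₀) : n ∈ ℤ}. -/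
namespace PadicInt
variable {p : ℕ} [hp : Fact p.Prime]

private lemma coe_ne_zero' {x : ℤ_[p]} (hx : x ≠ 0) : (x : ℚ_[p]) ≠ 0 := by
  exact fun h => hx (Subtype.ext h)

private lemma val_mul' {x y : ℤ_[p]} (hx : x ≠ 0) (hy : y ≠ 0) :
    (x * y).valuation = x.valuation + y.valuation := by
  exact valuation_mul hx hy

private lemma dvd_iff_val_le' {a x : ℤ_[p]} (ha : a ≠ 0) (hx : x ≠ 0) :
    a ∣ x ↔ a.valuation ≤ x.valuation := by
  conv_lhs => rw [unitCoeff_spec ha, mul_comm]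
  rw [Units.mul_right_dvd, ← Ideal.mem_span_singleton,
    mem_span_pow_iff_le_valuation x hx]

private lemma pow_dvd_iff' {x : ℤ_[p]} (hx : x ≠ 0) (k : ℕ) :
    (p : ℤ_[p]) ^ k ∣ x ↔ (k : ℤ) ≤ x.valuation := by
  rw [← Ideal.mem_span_singleton, mem_span_pow_iff_le_valuation x hx]
  exact Nat.cast_le.symm

end PadicInt

open PadicInt

open scoped Classical in
/-- Computational heart of the proof of Lemma 3.8 of the paper: the kernel of the
homomorphism `(z, m) ↦ a·z + c·m` on `ℤ_p × ℤ` (with `a ≠ 0`) is infinite cyclic,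
generated by `(z₀, m₀)` where `m₀ = p^{max(0, v_p(a) - v_p(c))}` (with `m₀ = 1`
when `c = 0`) and `z₀ = -m₀·c/a ∈ ℤ_p`. -/
theorem stmt_9 (p : ℕ) [Fact p.Prime] (a c : ℤ_[p]) (ha : a ≠ 0)
    (m₀ : ℤ)
    (hm₀ : m₀ = if c = 0 then 1 else (p : ℤ) ^ (max 0 ((a.valuation : ℤ) - (c.valuation : ℤ))).toNat) :
    ∃ z₀ : ℤ_[p], a * z₀ = -((m₀ : ℤ_[p]) * c) ∧
      {zm : ℤ_[p] × ℤ | a * zm.1 + c * (zm.2 : ℤ_[p]) = 0} =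
        {zm : ℤ_[p] × ℤ | ∃ n : ℤ, zm.1 = (n : ℤ_[p]) * z₀ ∧ zm.2 = n * m₀} := by
  have hp : (p : ℤ_[p]) ≠ 0 := Nat.cast_ne_zero.mpr (Fact.out : p.Prime).pos.ne'
  by_cases hc : c = 0
  · subst hc
    rw [if_pos rfl] at hm₀; subst hm₀
    refine ⟨0, by simp, ?_⟩
    ext ⟨z, m⟩
    simp only [Set.mem_setOf_eq, mul_zero, add_zero, zero_mul, Int.cast_one, mul_one]
    constructor
    · intro h
      have hz : z = 0 := by
        rcases mul_eq_zero.mp h with h | h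
        · exact absurd h ha
        · exact h
      exact ⟨m, by simp [hz], by simp⟩
    · rintro ⟨n, h1, h2⟩
      simp [h1]
  · rw [if_neg hc] at hm₀
    set k : ℕ := (max 0 ((a.valuation : ℤ) - (c.valuation : ℤ))).toNat with hk
    have hkk : (a.valuation : ℤ) - (c.valuation : ℤ) ≤ (k : ℤ) :=
      le_trans (le_max_right _ _) (Int.self_le_toNat _)
    have hpkc : (p : ℤ_[p]) ^ k * c ≠ 0 := mul_ne_zero (pow_ne_zero _ hp) hc
    have hdvd : a ∣ (p : ℤ_[p]) ^ k * c := by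
      rw [dvd_iff_val_le' ha hpkc, valuation_p_pow_mul k c hc]
      omega
    obtain ⟨z₀', hz₀'⟩ := hdvd
    have hcast : ((m₀ : ℤ) : ℤ_[p]) = (p : ℤ_[p]) ^ k := by
      rw [hm₀]; push_cast; ring
    refine ⟨-z₀', by rw [hcast, hz₀']; ring, ?_⟩
    ext ⟨z, m⟩
    simp only [Set.mem_setOf_eq]
    constructor
    · intro h
      by_cases hm : m = 0
      · refine ⟨0, ?_, by simp [hm]⟩
        have : a * z = 0 := by simpa [hm] using h
        rcases mul_eq_zero.mp this with h' | h'
        · exact absurd h' ha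
        · simp [h']
      · have hmz : ((m : ℤ) : ℤ_[p]) ≠ 0 := Int.cast_ne_zero.mpr hm
        have hadvd : a ∣ c * (m : ℤ_[p]) := ⟨-z, by linear_combination h⟩
        have hval : (k : ℤ) ≤ ((m : ℤ) : ℤ_[p]).valuation := by
          rw [dvd_iff_val_le' ha (mul_ne_zero hc hmz), val_mul' hc hmz] at hadvd
          have := Int.natCast_nonneg (((m : ℤ) : ℤ_[p]).valuation)
          have h2 : (k : ℤ) = max 0 ((a.valuation : ℤ) - (c.valuation : ℤ)) := by
            rw [hk, Int.toNat_of_nonneg (le_max_left _ _)]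
          omega
        have : (p : ℤ) ^ k ∣ m := by
          rw [← pow_p_dvd_int_iff]
          exact (pow_dvd_iff' hmz k).mpr hval
        obtain ⟨n, hn⟩ := this
        refine ⟨n, ?_, by rw [hn, hm₀]; ring⟩
        have key : a * z = a * ((n : ℤ_[p]) * -z₀') := by
          have hmc : ((m : ℤ) : ℤ_[p]) = (p : ℤ_[p]) ^ k * (n : ℤ_[p]) := by
            rw [hn]; push_cast; ring
          linear_combination h - (n : ℤ_[p]) * hz₀' - c * hmc
        exact mul_left_cancel₀ ha key
    · rintro ⟨n, h1, h2⟩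
      rw [h1, h2]
      have : ((n * m₀ : ℤ) : ℤ_[p]) = (n : ℤ_[p]) * (p : ℤ_[p]) ^ k := by
        push_cast [hm₀]; ring
      rw [this]
      linear_combination (n : ℤ_[p]) * hz₀'
end
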